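/- For every x₀ ∈ ℝ, r > 0, and t > 0, there exist v ∈ H^{1/2}(ℝ) and an open set U ⊂ ℝ with [x₀−r, x₀+r] ⊂ U such that v = 1 a.e. on U and [v]²_{H^{1/2}(ℝ)} ≤ t; consequently the H^{1/2}-capacity CAP_{1/2}((x₀−r, x₀+r)) := inf{ [v]²_{H^{1/2}(ℝ)} : v ∈ H^{1/2}(ℝ), v = 1 a.e. on an open neighborhood of (x₀−r, x₀+r) } equals 0. Moreover, for every x₀ ∈ ℝ and t > 0 there exist v ∈ H^{1/2}(ℝ) and an open set U ∋ x₀ such that v = 1 a.e. on U and ‖v‖²_{L²(ℝ)} + [v]²_{H^{1/2}(ℝ)} ≤ t; consequently the capacity of the singleton {x₀} measured with the full H^{1/2}-norm also equals 0. -/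

import Mathlib

open MeasureTheory Filter Set

/-- Squared Gagliardo `H^{1/2}` seminorm, `[v]² = ∫∫ (v(x)-v(y))²/(x-y)² dx dy`,
as a lower integral (so that finiteness expresses membership of the homogeneous space). -/
noncomputable def gagliardoSq (v : ℝ → ℝ) : ENNReal :=
  ∫⁻ x : ℝ, ∫⁻ y : ℝ, ENNReal.ofReal ((v x - v y) ^ 2 / (x - y) ^ 2)

lemma lintegral_comp_neg (g : ℝ → ENNReal) : ∫⁻ x : ℝ, g (-x) = ∫⁻ x, g x := by
  calc ∫⁻ x : ℝ, g (-x) = ∫⁻ x, g ((MeasurableEquiv.neg ℝ) x) := rfl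
  _ = ∫⁻ x, g x ∂(Measure.map (⇑(MeasurableEquiv.neg ℝ)) volume) := (lintegral_map_equiv g _).symm
  _ = ∫⁻ x, g x := by
      rw [show ⇑(MeasurableEquiv.neg ℝ) = (Neg.neg : ℝ → ℝ) from rfl, Measure.map_neg_eq_self]

lemma lintegral_comp_abs (f : ℝ → ENNReal) :
    ∫⁻ x : ℝ, f |x| = 2 * ∫⁻ x in Ioi (0:ℝ), f x := by
  have split : ∫⁻ x : ℝ, f |x| = (∫⁻ x in Iio (0:ℝ), f |x|) + ∫⁻ x in Ici (0:ℝ), f |x| := by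
    have h := lintegral_add_compl (μ := volume) (fun x => f |x|) (measurableSet_Iio (a := (0:ℝ)))
    rw [compl_Iio] at h
    exact h.symm
  have hIci : ∫⁻ x in Ici (0:ℝ), f |x| = ∫⁻ x in Ioi (0:ℝ), f x := by
    calc ∫⁻ x in Ici (0:ℝ), f |x| = ∫⁻ x in Ioi (0:ℝ), f |x| :=
          (setLIntegral_congr (Ioi_ae_eq_Ici (a := (0:ℝ)))).symm
    _ = ∫⁻ x in Ioi (0:ℝ), f x := by
        refine setLIntegral_congr_fun measurableSet_Ioi (fun x hx => ?_)
        rw [abs_of_pos hx]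
  have hIio : ∫⁻ x in Iio (0:ℝ), f |x| = ∫⁻ x in Ioi (0:ℝ), f x := by
    have h1 : ∫⁻ x in Iio (0:ℝ), f |x| = ∫⁻ x : ℝ, (Iio (0:ℝ)).indicator (fun x => f |x|) x := by
      rw [lintegral_indicator measurableSet_Iio]
    have h2 := lintegral_comp_neg (fun x => (Iio (0:ℝ)).indicator (fun x => f |x|) x)
    rw [h1, ← h2]
    have h3 : ∀ x : ℝ, (Iio (0:ℝ)).indicator (fun x => f |x|) (-x)
        = (Ioi (0:ℝ)).indicator (fun x => f |x|) x := by
      intro x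
      simp only [indicator_apply, mem_Iio, mem_Ioi, abs_neg, neg_lt_zero]
    simp_rw [h3]
    rw [lintegral_indicator measurableSet_Ioi]
    refine setLIntegral_congr_fun measurableSet_Ioi (fun x hx => ?_)
    rw [abs_of_pos hx]
  rw [split, hIci, hIio, two_mul]

noncomputable def psif (N ρ x : ℝ) : ℝ := max N (min (2*N) (Real.log (|x| / ρ)))
noncomputable def vf (N ρ x : ℝ) : ℝ := 2 - psif N ρ x / N

section props
variable {N ρ : ℝ} (hN : 1 ≤ N) (hρ : 0 < ρ)
include hN

lemma psif_le (x : ℝ) : psif N ρ x ≤ 2*N := by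
  have h0 : (0:ℝ) < N := lt_of_lt_of_le one_pos hN
  exact max_le (by linarith) (min_le_left _ _)

lemma le_psif (x : ℝ) : N ≤ psif N ρ x := le_max_left _ _

lemma vf_mem (x : ℝ) : 0 ≤ vf N ρ x ∧ vf N ρ x ≤ 1 := by
  have h0 : (0:ℝ) < N := lt_of_lt_of_le one_pos hN
  have h1 := psif_le hN (ρ := ρ) x
  have h2 := le_psif hN (ρ := ρ) x
  constructor
  · have : psif N ρ x / N ≤ 2 := by rw [div_le_iff₀ h0]; linarith
    simp only [vf]; linarith
  · have : 1 ≤ psif N ρ x / N := by rw [le_div_iff₀ h0]; linarith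
    simp only [vf]; linarith

include hρ

lemma psif_eq_left {x : ℝ} (hx : |x| ≤ ρ * Real.exp N) : psif N ρ x = N := by
  have h0 : (0:ℝ) < N := lt_of_lt_of_le one_pos hN
  have hlog : Real.log (|x| / ρ) ≤ N := by
    rcases eq_or_lt_of_le (abs_nonneg x) with h | h
    · simp [← h, Real.log_zero]; positivity
    · have hpos : 0 < |x| / ρ := div_pos h hρ
      rw [Real.log_le_iff_le_exp hpos, div_le_iff₀ hρ]
      linarith [mul_comm ρ (Real.exp N) ▸ hx]
  have : min (2*N) (Real.log (|x| / ρ)) ≤ N := le_trans (min_le_right _ _) hlog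
  simp [psif, max_eq_left this]

lemma psif_eq_right {x : ℝ} (hx : ρ * Real.exp (2*N) ≤ |x|) : psif N ρ x = 2*N := by
  have h0 : (0:ℝ) < N := lt_of_lt_of_le one_pos hN
  have hxpos : 0 < |x| := lt_of_lt_of_le (by positivity) hx
  have hlog : 2*N ≤ Real.log (|x| / ρ) := by
    rw [Real.le_log_iff_exp_le (div_pos hxpos hρ), le_div_iff₀ hρ]
    linarith [mul_comm ρ (Real.exp (2*N)) ▸ hx]
  rw [psif, min_eq_left hlog, max_eq_right (by linarith)]

lemma vf_eq_one {x : ℝ} (hx : |x| ≤ ρ * Real.exp N) : vf N ρ x = 1 := by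
  have h0 : (0:ℝ) < N := lt_of_lt_of_le one_pos hN
  rw [vf, psif_eq_left hN hρ hx, div_self (ne_of_gt h0)]; ring

lemma vf_eq_zero {x : ℝ} (hx : ρ * Real.exp (2*N) ≤ |x|) : vf N ρ x = 0 := by
  have h0 : (0:ℝ) < N := lt_of_lt_of_le one_pos hN
  rw [vf, psif_eq_right hN hρ hx]
  field_simp
  ring

end props

noncomputable def m1 (N ρ : ℝ) (x y : ℝ) : ENNReal :=
  if ρ * Real.exp N / 2 < |x| ∧ |x| < ρ * Real.exp (2*N) ∧ |y| ≤ 2*|x|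
  then ENNReal.ofReal (1/(N^2*x^2)) else 0

noncomputable def m2 (N ρ : ℝ) (x y : ℝ) : ENNReal :=
  if ρ * Real.exp N < |x| ∧ 0 < |y| ∧ |y| < |x|/2 ∧ |y| < ρ * Real.exp (2*N)
  then ENNReal.ofReal ((64/N^2) * |y| ^ (-(1/2) : ℝ) * |x| ^ (-(3/2) : ℝ)) else 0

section key
variable {N ρ : ℝ} (hN : 1 ≤ N) (hρ : 0 < ρ)
include hN hρ

lemma psif_lip {x y : ℝ} (hx : x ≠ 0) (hy : y ≠ 0) (hxy : |x| ≤ |y|) :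
    |psif N ρ x - psif N ρ y| ≤ Real.log (|y| / |x|) := by
  have hax : 0 < |x| := abs_pos.2 hx
  have hay : 0 < |y| := abs_pos.2 hy
  have h1 : |psif N ρ x - psif N ρ y|
      ≤ |min (2*N) (Real.log (|x|/ρ)) - min (2*N) (Real.log (|y|/ρ))| := by
    have h00 := abs_max_sub_max_le_max N (min (2*N) (Real.log (|x|/ρ))) N
      (min (2*N) (Real.log (|y|/ρ)))
    rw [sub_self, abs_zero, max_eq_right (a := (0:ℝ)) (abs_nonneg _)] at h00
    exact h00
  have h2 : |min (2*N) (Real.log (|x|/ρ)) - min (2*N) (Real.log (|y|/ρ))|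
      ≤ |Real.log (|x|/ρ) - Real.log (|y|/ρ)| := by
    have h00 := abs_min_sub_min_le_max (2*N) (Real.log (|x|/ρ)) (2*N) (Real.log (|y|/ρ))
    rw [sub_self, abs_zero, max_eq_right (a := (0:ℝ)) (abs_nonneg _)] at h00
    exact h00
  have h3 : Real.log (|x|/ρ) - Real.log (|y|/ρ) = Real.log |x| - Real.log |y| := by
    rw [Real.log_div (ne_of_gt hax) (ne_of_gt hρ), Real.log_div (ne_of_gt hay) (ne_of_gt hρ)]
    ring
  have h4 : |Real.log (|x|/ρ) - Real.log (|y|/ρ)| = Real.log |y| - Real.log |x| := by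
    rw [h3, abs_of_nonpos (by linarith [Real.log_le_log hax hxy]), neg_sub]
  calc |psif N ρ x - psif N ρ y| ≤ |Real.log (|x|/ρ) - Real.log (|y|/ρ)| := le_trans h1 h2
  _ = Real.log |y| - Real.log |x| := h4
  _ = Real.log (|y|/|x|) := (Real.log_div (ne_of_gt hay) (ne_of_gt hax)).symm

lemma key_aux {x y : ℝ} (hx : x ≠ 0) (hy : y ≠ 0) (hxy : |x| ≤ |y|) :
    ENNReal.ofReal ((vf N ρ x - vf N ρ y) ^ 2 / (x - y) ^ 2)
      ≤ m1 N ρ x y + m2 N ρ y x := by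
  have h0 : (0:ℝ) < N := lt_of_lt_of_le one_pos hN
  have hax : 0 < |x| := abs_pos.2 hx
  have hay : 0 < |y| := abs_pos.2 hy
  set A := ρ * Real.exp N with hAdef
  set B := ρ * Real.exp (2*N) with hBdef
  have hA : 0 < A := by positivity
  have hB : 0 < B := by positivity
  by_cases hpsi : psif N ρ x = psif N ρ y
  · have hv : vf N ρ x - vf N ρ y = 0 := by simp [vf, hpsi]
    rw [hv]
    simp
  · have hyA : A < |y| := by
      by_contra h
      push_neg at h
      exact hpsi (by rw [psif_eq_left hN hρ (le_trans hxy h), psif_eq_left hN hρ h])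
    have hxB : |x| < B := by
      by_contra h
      push_neg at h
      exact hpsi (by rw [psif_eq_right hN hρ h, psif_eq_right hN hρ (le_trans h hxy)])
    have hlip := psif_lip hN hρ hx hy hxy
    have hvd : |vf N ρ x - vf N ρ y| = |psif N ρ x - psif N ρ y| / N := by
      have : vf N ρ x - vf N ρ y = (psif N ρ y - psif N ρ x) / N := by
        rw [vf, vf]; field_simp
        ring
      rw [this, abs_div, abs_of_pos h0, abs_sub_comm]

    have hlogpos : 0 ≤ Real.log (|y|/|x|) :=
      Real.log_nonneg ((one_le_div hax).2 hxy)
    rcases le_or_gt |y| (2*|x|) with hb | hb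
    · -- near-diagonal case, use m1 x y
      have hcond : A/2 < |x| ∧ |x| < B ∧ |y| ≤ 2*|x| := ⟨by linarith, hxB, hb⟩
      have hm1 : m1 N ρ x y = ENNReal.ofReal (1/(N^2*x^2)) := if_pos hcond
      refine le_trans ?_ (le_add_right le_rfl)
      rw [hm1]
      apply ENNReal.ofReal_le_ofReal
      by_cases hxy0 : x = y
      · rw [hxy0, sub_self, zero_pow (by norm_num), zero_div]
        positivity
      · have hsub : x - y ≠ 0 := sub_ne_zero.2 hxy0
        have hd : 0 < (x - y)^2 := by positivity
        have habs : |vf N ρ x - vf N ρ y| ≤ |x - y| / (N * |x|) := by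
          have l1 : Real.log (|y|/|x|) ≤ (|y| - |x|) / |x| := by
            have h5 := Real.log_le_sub_one_of_pos (div_pos hay hax)
            have e : |y|/|x| - 1 = (|y| - |x|)/|x| := by field_simp
            linarith [e ▸ h5]
          have l2 : |y| - |x| ≤ |x - y| := by
            have h6 := abs_sub_abs_le_abs_sub y x
            rwa [abs_sub_comm] at h6
          rw [hvd]
          have l3 : |psif N ρ x - psif N ρ y| ≤ |x - y| / |x| :=
            le_trans hlip (le_trans l1 (by gcongr))
          rw [div_le_div_iff₀ h0 (by positivity)]
          calc |psif N ρ x - psif N ρ y| * (N * |x|) ≤ (|x - y| / |x|) * (N * |x|) := by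
                gcongr
          _ = |x - y| * N := by field_simp
        have hsq : (vf N ρ x - vf N ρ y)^2 ≤ (x - y)^2 / (N^2 * x^2) := by
          have := pow_le_pow_left₀ (abs_nonneg _) habs 2
          rw [sq_abs] at this
          refine le_trans this (le_of_eq ?_)
          rw [div_pow, mul_pow, sq_abs, sq_abs]
        rw [div_le_div_iff₀ hd (by positivity)]
        calc (vf N ρ x - vf N ρ y)^2 * (N^2 * x^2)
            ≤ ((x - y)^2 / (N^2 * x^2)) * (N^2 * x^2) := by gcongr
        _ = 1 * (x - y)^2 := by
              field_simp
    · -- far case, use m2 y x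
      have hcond : A < |y| ∧ 0 < |x| ∧ |x| < |y|/2 ∧ |x| < B :=
        ⟨hyA, hax, by linarith, hxB⟩
      have hm2 : m2 N ρ y x = ENNReal.ofReal ((64/N^2) * |x| ^ (-(1/2):ℝ) * |y| ^ (-(3/2):ℝ)) :=
        if_pos hcond
      refine le_trans ?_ (le_add_left le_rfl)
      rw [hm2]
      apply ENNReal.ofReal_le_ofReal
      set u := |y| / |x| with hu
      have hupos : 0 < u := div_pos hay hax
      have hL4 : Real.log u ≤ 4 * u ^ ((1/4):ℝ) := by
        have e1 : Real.log u = 4 * Real.log (u ^ ((1/4):ℝ)) := by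
          rw [Real.log_rpow hupos]; ring
        have e2 : Real.log (u ^ ((1/4):ℝ)) ≤ u ^ ((1/4):ℝ) :=
          le_trans (Real.log_le_sub_one_of_pos (Real.rpow_pos_of_pos hupos _)) (by linarith)
        linarith
      have habs : |vf N ρ x - vf N ρ y| ≤ 4 * u ^ ((1/4):ℝ) / N := by
        have h7 : |psif N ρ x - psif N ρ y| ≤ 4 * u ^ ((1/4):ℝ) := le_trans hlip hL4
        rw [hvd]
        gcongr
      have hsq : (vf N ρ x - vf N ρ y)^2 ≤ 16 * u ^ ((1/2):ℝ) / N^2 := by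
        have h8 := pow_le_pow_left₀ (abs_nonneg _) habs 2
        rw [sq_abs] at h8
        refine le_trans h8 (le_of_eq ?_)
        have e3 : (u ^ ((1/4):ℝ))^(2:ℕ) = u ^ ((1/2):ℝ) := by
          rw [← Real.rpow_natCast (u ^ ((1/4):ℝ)) 2, ← Real.rpow_mul hupos.le]
          norm_num
        rw [div_pow, mul_pow, e3]
        norm_num
      have l2 : |y| - |x| ≤ |x - y| := by
        have h6 := abs_sub_abs_le_abs_sub y x
        rwa [abs_sub_comm] at h6
      have hy2 : (|y|/2)^2 ≤ (x - y)^2 := by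
        have h9 : |y|/2 ≤ |x - y| := by linarith
        have := pow_le_pow_left₀ (by positivity : (0:ℝ) ≤ |y|/2) h9 2
        rwa [sq_abs] at this
      have hDpos : 0 < (|y|/2)^2 := by positivity
      calc (vf N ρ x - vf N ρ y)^2 / (x - y)^2
          ≤ (16 * u ^ ((1/2):ℝ) / N^2) / ((|y|/2)^2) :=
            div_le_div₀ (by positivity) hsq hDpos hy2
      _ = 64/N^2 * |x| ^ (-(1/2):ℝ) * |y| ^ (-(3/2):ℝ) := by
          rw [hu, Real.div_rpow hay.le hax.le, Real.rpow_neg hax.le, Real.rpow_neg hay.le]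
          have e1 : |y| ^ ((1/2):ℝ) = |y|^2 / |y| ^ ((3/2):ℝ) := by
            rw [eq_div_iff (ne_of_gt (Real.rpow_pos_of_pos hay _)),
              ← Real.rpow_natCast |y| 2, ← Real.rpow_add hay]
            norm_num
          rw [e1]
          have n1 : |x| ^ ((1/2):ℝ) ≠ 0 := ne_of_gt (Real.rpow_pos_of_pos hax _)
          have n2 : |y| ^ ((3/2):ℝ) ≠ 0 := ne_of_gt (Real.rpow_pos_of_pos hay _)
          have n3 : (N:ℝ) ≠ 0 := ne_of_gt h0
          have n4 : |y| ≠ 0 := ne_of_gt hay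
          field_simp
          ring
lemma key_pointwise {x y : ℝ} (hx : x ≠ 0) (hy : y ≠ 0) :
    ENNReal.ofReal ((vf N ρ x - vf N ρ y) ^ 2 / (x - y) ^ 2)
      ≤ m1 N ρ x y + m1 N ρ y x + m2 N ρ x y + m2 N ρ y x := by
  have hsum : ∀ a b c d : ENNReal, a + d ≤ a + b + c + d :=
    fun a b c d => by
      calc a + d ≤ (a + b + c) + d := add_le_add (le_add_right (le_add_right le_rfl)) le_rfl
      _ = a + b + c + d := rfl
  rcases le_total |x| |y| with h | h
  · exact le_trans (key_aux hN hρ hx hy h) (hsum _ _ _ _)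
  · have e : (vf N ρ x - vf N ρ y) ^ 2 / (x - y) ^ 2
        = (vf N ρ y - vf N ρ x) ^ 2 / (y - x) ^ 2 := by ring
    rw [e]
    refine le_trans (key_aux hN hρ hy hx h) ?_
    calc m1 N ρ y x + m2 N ρ x y
        ≤ (m1 N ρ x y + m1 N ρ y x) + (m2 N ρ x y + m2 N ρ y x) :=
          add_le_add (le_add_left le_rfl) (le_add_right le_rfl)
    _ = m1 N ρ x y + m1 N ρ y x + m2 N ρ x y + m2 N ρ y x := by ring

end key

section meas

lemma m1_meas (N ρ : ℝ) : Measurable (Function.uncurry (m1 N ρ)) := by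
  unfold m1 Function.uncurry
  refine Measurable.ite ?_ (by measurability) measurable_const
  refine MeasurableSet.inter ?_ (MeasurableSet.inter ?_ ?_)
  · exact measurableSet_lt measurable_const measurable_fst.abs
  · exact measurableSet_lt measurable_fst.abs measurable_const
  · exact measurableSet_le measurable_snd.abs (measurable_fst.abs.const_mul 2)

lemma m2_meas (N ρ : ℝ) : Measurable (Function.uncurry (m2 N ρ)) := by
  unfold m2 Function.uncurry
  refine Measurable.ite ?_ (by measurability) measurable_const
  refine MeasurableSet.inter ?_ (MeasurableSet.inter ?_ (MeasurableSet.inter ?_ ?_))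
  · exact measurableSet_lt measurable_const measurable_fst.abs
  · exact measurableSet_lt measurable_const measurable_snd.abs
  · exact measurableSet_lt measurable_snd.abs (measurable_fst.abs.div_const 2)
  · exact measurableSet_lt measurable_snd.abs measurable_const

lemma vf_meas (N ρ : ℝ) : Measurable (vf N ρ) := by
  have h1 : Measurable fun x : ℝ => Real.log (|x| / ρ) :=
    Real.measurable_log.comp (measurable_id.abs.div_const ρ)
  exact measurable_const.sub ((measurable_const.max (measurable_const.min h1)).div_const N)

end meas


section integrals
variable {N ρ : ℝ} (hN : 1 ≤ N) (hρ : 0 < ρ)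
include hN hρ

lemma log_twoexp : Real.log (2 * Real.exp N) ≤ N + 1 := by
  rw [Real.log_mul two_ne_zero (Real.exp_ne_zero N), Real.log_exp]
  have := Real.log_le_sub_one_of_pos (by norm_num : (0:ℝ) < 2)
  linarith

lemma D1_bound : ∫⁻ x : ℝ, ∫⁻ y : ℝ, m1 N ρ x y ≤ ENNReal.ofReal (8*(N+1)/N^2) := by
  have h0 : (0:ℝ) < N := lt_of_lt_of_le one_pos hN
  set A := ρ * Real.exp N with hAdef
  set B := ρ * Real.exp (2*N) with hBdef
  have hA : 0 < A := by positivity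
  have hB : 0 < B := by positivity
  have hAB : A < B := by
    have : Real.exp N < Real.exp (2*N) := Real.exp_lt_exp.2 (by linarith)
    exact (mul_lt_mul_iff_right₀ hρ).2 this
  set F : ℝ → ENNReal := fun t => if A/2 < t ∧ t < B then ENNReal.ofReal (4/(N^2*t)) else 0
    with hFdef
  have inner_eq : ∀ x : ℝ, (∫⁻ y : ℝ, m1 N ρ x y) = F |x| := by
    intro x
    by_cases hc : A/2 < |x| ∧ |x| < B
    · have hax : 0 < |x| := lt_trans (by positivity) hc.1
      have hptw : ∀ y, m1 N ρ x y
          = (Icc (-(2*|x|)) (2*|x|)).indicator (fun _ => ENNReal.ofReal (1/(N^2*x^2))) y := by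
        intro y
        by_cases hy : |y| ≤ 2*|x|
        · rw [m1, if_pos ⟨hc.1, hc.2, hy⟩,
            indicator_of_mem (by rw [mem_Icc]; constructor <;> [linarith [abs_le.1 hy]; exact (abs_le.1 hy).2])]
        · rw [m1, if_neg (fun h => hy h.2.2), indicator_of_notMem]
          rw [mem_Icc]
          intro h
          exact hy (abs_le.2 ⟨by linarith [h.1], h.2⟩)
      rw [lintegral_congr hptw, lintegral_indicator measurableSet_Icc, setLIntegral_const,
        Real.volume_Icc, hFdef]
      simp only [if_pos hc]
      rw [← ENNReal.ofReal_mul (by positivity)]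
      congr 1
      have hx0 : x ≠ 0 := abs_pos.1 hax
      have e2 : 2*|x| - -(2*|x|) = 4*|x| := by ring
      rw [e2, div_mul_eq_mul_div, one_mul, div_eq_div_iff (by positivity) (by positivity),
        ← sq_abs x]
      ring
    · have hptw : ∀ y, m1 N ρ x y = 0 := fun y => if_neg (fun h => hc ⟨h.1, h.2.1⟩)
      rw [lintegral_congr hptw, lintegral_zero, hFdef]
      simp only [if_neg hc]
  have hsub : Ioo (A/2) B ⊆ Ioi (0:ℝ) := fun t ht => lt_trans (by positivity) ht.1
  have hFind : ∀ t : ℝ, F t = (Ioo (A/2) B).indicator (fun t => ENNReal.ofReal (4/(N^2*t))) t := by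
    intro t
    by_cases h : A/2 < t ∧ t < B
    · rw [hFdef]; simp only [if_pos h, indicator_of_mem (mem_Ioo.2 h)]
    · rw [hFdef]; simp only [if_neg h]
      rw [indicator_of_notMem (fun hm => h (mem_Ioo.1 hm))]
  have hval : ∫⁻ t in Ioi (0:ℝ), F t = ∫⁻ t in Ioo (A/2) B, ENNReal.ofReal (4/(N^2*t)) := by
    rw [lintegral_congr hFind, lintegral_indicator measurableSet_Ioo,
      Measure.restrict_restrict measurableSet_Ioo, inter_eq_self_of_subset_left hsub]
  have hint : IntegrableOn (fun t : ℝ => 4/(N^2*t)) (Ioo (A/2) B) := by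
    refine (ContinuousOn.integrableOn_compact isCompact_Icc ?_).mono_set Ioo_subset_Icc_self
    refine ContinuousOn.div continuousOn_const (continuousOn_const.mul continuousOn_id) ?_
    intro t ht
    have : 0 < t := lt_of_lt_of_le (by positivity) ht.1
    positivity
  have hintval : ∫ t in Ioo (A/2) B, 4/(N^2*t) = 4/N^2 * Real.log (B/(A/2)) := by
    rw [← integral_Ioc_eq_integral_Ioo, ← intervalIntegral.integral_of_le (by linarith : A/2 ≤ B)]
    have e : ∀ t : ℝ, 4/(N^2*t) = (4/N^2) * (1/t) := fun t => by ring
    simp_rw [e]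
    rw [intervalIntegral.integral_const_mul, integral_one_div]
    rw [uIcc_of_le (by linarith : A/2 ≤ B)]
    rintro ⟨h1, h2⟩
    linarith
  have hlogB : Real.log (B/(A/2)) ≤ N + 1 := by
    have e : B/(A/2) = 2 * Real.exp N := by
      rw [hBdef, hAdef, two_mul, Real.exp_add]
      field_simp
    rw [e]
    exact log_twoexp hN hρ
  calc ∫⁻ x : ℝ, ∫⁻ y : ℝ, m1 N ρ x y = ∫⁻ x : ℝ, F |x| := lintegral_congr inner_eq
  _ = 2 * ∫⁻ t in Ioi (0:ℝ), F t := lintegral_comp_abs F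
  _ = 2 * ENNReal.ofReal (4/N^2 * Real.log (B/(A/2))) := by
      have hnn : 0 ≤ᵐ[volume.restrict (Ioo (A/2) B)] fun t : ℝ => 4/(N^2*t) := by
        refine (ae_restrict_iff' measurableSet_Ioo).2 (ae_of_all _ fun t ht => ?_)
        have : 0 < t := lt_of_lt_of_le (by positivity) ht.1.le
        positivity
      rw [hval, ← ofReal_integral_eq_lintegral_ofReal hint hnn, hintval]
  _ ≤ 2 * ENNReal.ofReal (4/N^2 * (N+1)) := by
      gcongr
  _ = ENNReal.ofReal (8*(N+1)/N^2) := by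
      rw [← ENNReal.ofReal_ofNat, ← ENNReal.ofReal_mul (by norm_num)]
      congr 1
      ring

lemma D2_bound : ∫⁻ x : ℝ, ∫⁻ y : ℝ, m2 N ρ x y ≤ ENNReal.ofReal (1536*(N+1)/N^2) := by
  have h0 : (0:ℝ) < N := lt_of_lt_of_le one_pos hN
  set A := ρ * Real.exp N with hAdef
  set B := ρ * Real.exp (2*N) with hBdef
  have hA : 0 < A := by positivity
  have hB : 0 < B := by positivity
  have hAB : A < B := by
    have : Real.exp N < Real.exp (2*N) := Real.exp_lt_exp.2 (by linarith)
    exact (mul_lt_mul_iff_right₀ hρ).2 this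
  set F2 : ℝ → ENNReal := fun t =>
    if A < t ∧ t ≤ 2*B then ENNReal.ofReal (256/N^2 * (1/t))
    else if 2*B < t then ENNReal.ofReal (256/N^2 * B^((1/2):ℝ) * t^(-(3/2):ℝ)) else 0
    with hF2def
  have inner_le : ∀ x : ℝ, (∫⁻ y : ℝ, m2 N ρ x y) ≤ F2 |x| := by
    intro x
    by_cases hcx : A < |x|
    · have hax : 0 < |x| := lt_trans hA hcx
      set c := min (|x|/2) B with hcdef
      have hc0 : 0 < c := lt_min (by positivity) hB
      have hptw : ∀ y : ℝ, m2 N ρ x y =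
          ((Ioo (0:ℝ) c).indicator
            (fun t => ENNReal.ofReal (64/N^2 * t^(-(1/2):ℝ) * |x|^(-(3/2):ℝ)))) |y| := by
        intro y
        by_cases hy : 0 < |y| ∧ |y| < c
        · rw [m2, if_pos ⟨hcx, hy.1, (lt_min_iff.1 hy.2).1, (lt_min_iff.1 hy.2).2⟩,
            indicator_of_mem (mem_Ioo.2 hy)]
        · rw [m2, if_neg (fun h => hy ⟨h.2.1, lt_min h.2.2.1 h.2.2.2⟩),
            indicator_of_notMem (fun hm => hy (mem_Ioo.1 hm))]
      have hIoo : ∫⁻ y : ℝ, m2 N ρ x y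
          = 2 * ∫⁻ t in Ioo (0:ℝ) c, ENNReal.ofReal (64/N^2 * t^(-(1/2):ℝ) * |x|^(-(3/2):ℝ)) := by
        rw [lintegral_congr hptw, lintegral_comp_abs]
        congr 1
        have hss0 : Ioo (0:ℝ) c ⊆ Ioi (0:ℝ) := fun t ht => ht.1
        rw [lintegral_indicator measurableSet_Ioo,
          Measure.restrict_restrict measurableSet_Ioo,
          inter_eq_self_of_subset_left hss0]
      have hint : IntegrableOn (fun t : ℝ => 64/N^2 * t^(-(1/2):ℝ) * |x|^(-(3/2):ℝ)) (Ioo 0 c) := by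
        have h1 : IntervalIntegrable (fun t : ℝ => t ^ (-(1/2):ℝ)) volume 0 c :=
          intervalIntegral.intervalIntegrable_rpow' (by norm_num)
        have h2 : IntegrableOn (fun t : ℝ => t ^ (-(1/2):ℝ)) (Ioo 0 c) :=
          ((intervalIntegrable_iff_integrableOn_Ioc_of_le hc0.le).1 h1).mono_set
            Ioo_subset_Ioc_self
        have e : (fun t : ℝ => 64/N^2 * t^(-(1/2):ℝ) * |x|^(-(3/2):ℝ))
            = fun t : ℝ => (64/N^2 * |x|^(-(3/2):ℝ)) * t^(-(1/2):ℝ) := by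
          funext t; ring
        rw [e]
        exact h2.const_mul _
      have hnn : 0 ≤ᵐ[volume.restrict (Ioo (0:ℝ) c)]
          fun t : ℝ => 64/N^2 * t^(-(1/2):ℝ) * |x|^(-(3/2):ℝ) := by
        refine (ae_restrict_iff' measurableSet_Ioo).2 (ae_of_all _ fun t ht => ?_)
        have h5 : (0:ℝ) ≤ t ^ (-(1/2):ℝ) := Real.rpow_nonneg ht.1.le _
        have h6 : (0:ℝ) ≤ |x| ^ (-(3/2):ℝ) := Real.rpow_nonneg (abs_nonneg x) _
        positivity
      have hrpval : ∫ t in Ioo (0:ℝ) c, t ^ (-(1/2):ℝ) = 2 * c ^ ((1/2):ℝ) := by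
        rw [← integral_Ioc_eq_integral_Ioo, ← intervalIntegral.integral_of_le hc0.le,
          integral_rpow (Or.inl (by norm_num))]
        have e0 : (-(1/2):ℝ)+1 = 1/2 := by norm_num
        rw [e0, Real.zero_rpow (by norm_num : (1/2:ℝ) ≠ 0)]
        ring
      have hval : ∫⁻ y : ℝ, m2 N ρ x y
          = 2 * ENNReal.ofReal ((64/N^2 * |x|^(-(3/2):ℝ)) * (2 * c ^ ((1/2):ℝ))) := by
        rw [hIoo, ← ofReal_integral_eq_lintegral_ofReal hint hnn]
        congr 2
        have e : (fun t : ℝ => 64/N^2 * t^(-(1/2):ℝ) * |x|^(-(3/2):ℝ))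
            = fun t : ℝ => (64/N^2 * |x|^(-(3/2):ℝ)) * t^(-(1/2):ℝ) := by
          funext t; ring
        rw [e, integral_const_mul, hrpval]
      rcases le_or_gt |x| (2*B) with hx2B | hx2B
      · have hcle : c ^ ((1/2):ℝ) ≤ |x| ^ ((1/2):ℝ) :=
          Real.rpow_le_rpow hc0.le (le_trans (min_le_left _ _) (by linarith)) (by norm_num)
        have hmul : |x|^(-(3/2):ℝ) * |x|^((1/2):ℝ) = 1/|x| := by
          rw [← Real.rpow_add hax]
          norm_num [Real.rpow_neg_one]
        have hreal : (64/N^2 * |x|^(-(3/2):ℝ)) * (2 * c ^ ((1/2):ℝ)) ≤ 128/N^2 * (1/|x|) := by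
          have h6 : (0:ℝ) ≤ |x| ^ (-(3/2):ℝ) := Real.rpow_nonneg (abs_nonneg x) _
          calc (64/N^2 * |x|^(-(3/2):ℝ)) * (2 * c ^ ((1/2):ℝ))
              ≤ (64/N^2 * |x|^(-(3/2):ℝ)) * (2 * |x| ^ ((1/2):ℝ)) := by
                refine mul_le_mul_of_nonneg_left (by linarith) (by positivity)
          _ = (128/N^2) * (|x|^(-(3/2):ℝ) * |x|^((1/2):ℝ)) := by ring
          _ = 128/N^2 * (1/|x|) := by rw [hmul]
        rw [hval]
        simp only [hF2def]
        rw [if_pos (show A < |x| ∧ |x| ≤ 2*B from ⟨hcx, hx2B⟩)]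
        calc 2 * ENNReal.ofReal ((64/N^2 * |x|^(-(3/2):ℝ)) * (2 * c ^ ((1/2):ℝ)))
            ≤ 2 * ENNReal.ofReal (128/N^2 * (1/|x|)) := by gcongr
        _ = ENNReal.ofReal (256/N^2 * (1/|x|)) := by
            rw [← ENNReal.ofReal_ofNat, ← ENNReal.ofReal_mul (by norm_num)]
            congr 1
            ring
      · have hcle : c ^ ((1/2):ℝ) ≤ B ^ ((1/2):ℝ) :=
          Real.rpow_le_rpow hc0.le (min_le_right _ _) (by norm_num)
        have hreal : (64/N^2 * |x|^(-(3/2):ℝ)) * (2 * c ^ ((1/2):ℝ))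
            ≤ 128/N^2 * B^((1/2):ℝ) * |x|^(-(3/2):ℝ) := by
          have h6 : (0:ℝ) ≤ |x| ^ (-(3/2):ℝ) := Real.rpow_nonneg (abs_nonneg x) _
          calc (64/N^2 * |x|^(-(3/2):ℝ)) * (2 * c ^ ((1/2):ℝ))
              ≤ (64/N^2 * |x|^(-(3/2):ℝ)) * (2 * B ^ ((1/2):ℝ)) := by
                refine mul_le_mul_of_nonneg_left (by linarith) (by positivity)
          _ = 128/N^2 * B^((1/2):ℝ) * |x|^(-(3/2):ℝ) := by ring
        rw [hval]
        simp only [hF2def]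
        rw [if_neg (show ¬(A < |x| ∧ |x| ≤ 2*B) from fun h => absurd h.2 (not_le.2 hx2B)),
          if_pos (show 2*B < |x| from hx2B)]
        calc 2 * ENNReal.ofReal ((64/N^2 * |x|^(-(3/2):ℝ)) * (2 * c ^ ((1/2):ℝ)))
            ≤ 2 * ENNReal.ofReal (128/N^2 * B^((1/2):ℝ) * |x|^(-(3/2):ℝ)) := by gcongr
        _ = ENNReal.ofReal (256/N^2 * B^((1/2):ℝ) * |x|^(-(3/2):ℝ)) := by
            rw [← ENNReal.ofReal_ofNat, ← ENNReal.ofReal_mul (by norm_num)]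
            congr 1
            ring
    · have hptw : ∀ y : ℝ, m2 N ρ x y = 0 := fun y => if_neg (fun h => hcx h.1)
      rw [lintegral_congr hptw, lintegral_zero]
      exact zero_le
  have hsplit : ∀ t : ℝ, F2 t
      = (Ioc A (2*B)).indicator (fun t => ENNReal.ofReal (256/N^2 * (1/t))) t
        + (Ioi (2*B)).indicator (fun t => ENNReal.ofReal (256/N^2 * B^((1/2):ℝ) * t^(-(3/2):ℝ))) t := by
    intro t
    simp only [hF2def]
    by_cases h1 : A < t ∧ t ≤ 2*B
    · rw [if_pos h1, indicator_of_mem (mem_Ioc.2 h1),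
        indicator_of_notMem (show t ∉ Ioi (2*B) from by simp only [mem_Ioi, not_lt]; exact h1.2)]
      simp
    · rw [if_neg h1, indicator_of_notMem (fun hm => h1 (mem_Ioc.1 hm))]
      by_cases h2 : 2*B < t
      · rw [if_pos h2, indicator_of_mem (mem_Ioi.2 h2), zero_add]
      · rw [if_neg h2, indicator_of_notMem (fun hm => h2 (mem_Ioi.1 hm)), add_zero]
  have hP1 : ∫⁻ t in Ioi (0:ℝ),
      (Ioc A (2*B)).indicator (fun t => ENNReal.ofReal (256/N^2 * (1/t))) t
      ≤ ENNReal.ofReal (256/N^2 * (N+1)) := by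
    have hss1 : Ioc A (2*B) ⊆ Ioi (0:ℝ) := fun t ht => lt_trans hA ht.1
    rw [lintegral_indicator measurableSet_Ioc, Measure.restrict_restrict measurableSet_Ioc,
      inter_eq_self_of_subset_left hss1]
    have hint : IntegrableOn (fun t : ℝ => 256/N^2 * (1/t)) (Ioc A (2*B)) := by
      refine (ContinuousOn.integrableOn_compact isCompact_Icc ?_).mono_set Ioc_subset_Icc_self
      refine continuousOn_const.mul (ContinuousOn.div continuousOn_const continuousOn_id ?_)
      intro t ht
      have : 0 < t := lt_of_lt_of_le hA ht.1
      positivity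
    have hnn : 0 ≤ᵐ[volume.restrict (Ioc A (2*B))] fun t : ℝ => 256/N^2 * (1/t) := by
      refine (ae_restrict_iff' measurableSet_Ioc).2 (ae_of_all _ fun t ht => ?_)
      have : 0 < t := lt_of_lt_of_le hA ht.1.le
      positivity
    rw [← ofReal_integral_eq_lintegral_ofReal hint hnn]
    apply ENNReal.ofReal_le_ofReal
    have hv : ∫ t in Ioc A (2*B), 256/N^2 * (1/t) = 256/N^2 * Real.log ((2*B)/A) := by
      rw [← intervalIntegral.integral_of_le (by linarith : A ≤ 2*B),
        intervalIntegral.integral_const_mul, integral_one_div]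
      rw [uIcc_of_le (by linarith : A ≤ 2*B)]
      rintro ⟨ha, hb⟩
      linarith
    rw [hv]
    have hlog : Real.log ((2*B)/A) ≤ N + 1 := by
      have e : (2*B)/A = 2 * Real.exp N := by
        rw [hBdef, hAdef, show (2:ℝ)*N = N+N from by ring, Real.exp_add]
        field_simp
      rw [e]
      exact log_twoexp hN hρ
    exact mul_le_mul_of_nonneg_left hlog (by positivity)
  have hP2 : ∫⁻ t in Ioi (0:ℝ),
      (Ioi (2*B)).indicator (fun t => ENNReal.ofReal (256/N^2 * B^((1/2):ℝ) * t^(-(3/2):ℝ))) t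
      ≤ ENNReal.ofReal (512/N^2) := by
    have hss2 : Ioi (2*B) ⊆ Ioi (0:ℝ) := fun t ht => lt_trans (by positivity) (mem_Ioi.1 ht)
    rw [lintegral_indicator measurableSet_Ioi, Measure.restrict_restrict measurableSet_Ioi,
      inter_eq_self_of_subset_left hss2]
    have hint : IntegrableOn (fun t : ℝ => 256/N^2 * B^((1/2):ℝ) * t^(-(3/2):ℝ)) (Ioi (2*B)) :=
      (integrableOn_Ioi_rpow_of_lt (by norm_num) (by positivity)).const_mul _
    have hnn : 0 ≤ᵐ[volume.restrict (Ioi (2*B))]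
        fun t : ℝ => 256/N^2 * B^((1/2):ℝ) * t^(-(3/2):ℝ) := by
      refine (ae_restrict_iff' measurableSet_Ioi).2 (ae_of_all _ fun t ht => ?_)
      have h5 : (0:ℝ) ≤ t ^ (-(3/2):ℝ) := Real.rpow_nonneg (le_of_lt (lt_trans (by positivity) (mem_Ioi.1 ht))) _
      have h6 : (0:ℝ) ≤ B ^ ((1/2):ℝ) := Real.rpow_nonneg hB.le _
      positivity
    rw [← ofReal_integral_eq_lintegral_ofReal hint hnn]
    apply ENNReal.ofReal_le_ofReal
    rw [integral_const_mul, integral_Ioi_rpow_of_lt (by norm_num) (by positivity),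
      show ((-(3/2):ℝ) + 1) = (-(1/2):ℝ) from by norm_num]
    have e1 : -((2*B) ^ (-(1/2):ℝ))/(-(1/2):ℝ) = 2 * (2*B) ^ (-(1/2):ℝ) := by ring
    rw [e1]
    have h7 : (2*B) ^ (-(1/2):ℝ) ≤ B ^ (-(1/2):ℝ) :=
      Real.rpow_le_rpow_of_nonpos hB (by linarith) (by norm_num)
    have h8 : B^((1/2):ℝ) * B^(-(1/2):ℝ) = 1 := by
      rw [← Real.rpow_add hB]
      norm_num
    have h9 : (0:ℝ) ≤ B ^ ((1/2):ℝ) := Real.rpow_nonneg hB.le _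
    calc 256/N^2 * B^((1/2):ℝ) * (2 * (2*B) ^ (-(1/2):ℝ))
        ≤ 256/N^2 * B^((1/2):ℝ) * (2 * B ^ (-(1/2):ℝ)) := by
          refine mul_le_mul_of_nonneg_left (by linarith) (by positivity)
    _ = 512/N^2 * (B^((1/2):ℝ) * B^(-(1/2):ℝ)) := by ring
    _ = 512/N^2 := by rw [h8]; ring
  have hmeas1 : Measurable fun t : ℝ =>
      (Ioc A (2*B)).indicator (fun t => ENNReal.ofReal (256/N^2 * (1/t))) t := by
    refine Measurable.indicator ?_ measurableSet_Ioc
    exact ENNReal.measurable_ofReal.comp (measurable_const.mul (measurable_one.div measurable_id))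
  have hsum : ∫⁻ t in Ioi (0:ℝ), F2 t
      = (∫⁻ t in Ioi (0:ℝ),
          (Ioc A (2*B)).indicator (fun t => ENNReal.ofReal (256/N^2 * (1/t))) t)
        + ∫⁻ t in Ioi (0:ℝ),
          (Ioi (2*B)).indicator (fun t => ENNReal.ofReal (256/N^2 * B^((1/2):ℝ) * t^(-(3/2):ℝ))) t := by
    rw [← lintegral_add_left hmeas1]
    exact lintegral_congr hsplit
  calc ∫⁻ x : ℝ, ∫⁻ y : ℝ, m2 N ρ x y ≤ ∫⁻ x : ℝ, F2 |x| := lintegral_mono inner_le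
  _ = 2 * ∫⁻ t in Ioi (0:ℝ), F2 t := lintegral_comp_abs F2
  _ ≤ 2 * (ENNReal.ofReal (256/N^2 * (N+1)) + ENNReal.ofReal (512/N^2)) := by
      rw [hsum]
      exact mul_le_mul_right (add_le_add hP1 hP2) 2
  _ ≤ ENNReal.ofReal (1536*(N+1)/N^2) := by
      rw [← ENNReal.ofReal_add (by positivity) (by positivity),
        ← ENNReal.ofReal_ofNat, ← ENNReal.ofReal_mul (by norm_num)]
      apply ENNReal.ofReal_le_ofReal
      rw [← sub_nonneg]
      have e9 : 1536*(N+1)/N^2 - 2*(256/N^2*(N+1) + 512/N^2) = (1024*N)/N^2 := by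
        ring
      rw [e9]
      positivity

lemma gag_bound : gagliardoSq (vf N ρ) ≤ ENNReal.ofReal (10000/N) := by
  have h0 : (0:ℝ) < N := lt_of_lt_of_le one_pos hN
  have hm1u : Measurable (Function.uncurry (m1 N ρ)) := m1_meas N ρ
  have hm2u : Measurable (Function.uncurry (m2 N ρ)) := m2_meas N ρ
  have hm1s : Measurable (Function.uncurry fun x y : ℝ => m1 N ρ y x) :=
    hm1u.comp measurable_swap
  have hm2s : Measurable (Function.uncurry fun x y : ℝ => m2 N ρ y x) :=
    hm2u.comp measurable_swap
  have h1 : ∀ x : ℝ, Measurable fun y => m1 N ρ x y := fun x => hm1u.of_uncurry_left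
  have h1' : ∀ x : ℝ, Measurable fun y => m1 N ρ y x := fun x => hm1u.of_uncurry_right
  have h2 : ∀ x : ℝ, Measurable fun y => m2 N ρ x y := fun x => hm2u.of_uncurry_left
  have h2' : ∀ x : ℝ, Measurable fun y => m2 N ρ y x := fun x => hm2u.of_uncurry_right
  have hae : ∀ᵐ x : ℝ ∂(volume : Measure ℝ), x ≠ 0 := by
    rw [ae_iff]
    have e : {x : ℝ | ¬ x ≠ 0} = {0} := by ext x; simp
    rw [e]
    exact measure_singleton 0
  have stepA : gagliardoSq (vf N ρ)
      ≤ ∫⁻ x : ℝ, ∫⁻ y : ℝ, (m1 N ρ x y + m1 N ρ y x + m2 N ρ x y + m2 N ρ y x) := by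
    refine lintegral_mono_ae ?_
    filter_upwards [hae] with x hx
    refine lintegral_mono_ae ?_
    filter_upwards [hae] with y hy
    exact key_pointwise hN hρ hx hy
  have inner_split : ∀ x : ℝ,
      (∫⁻ y : ℝ, (m1 N ρ x y + m1 N ρ y x + m2 N ρ x y + m2 N ρ y x))
      = (∫⁻ y : ℝ, m1 N ρ x y) + (∫⁻ y : ℝ, m1 N ρ y x)
        + (∫⁻ y : ℝ, m2 N ρ x y) + (∫⁻ y : ℝ, m2 N ρ y x) := by
    intro x
    rw [lintegral_add_left (f := fun y => m1 N ρ x y + m1 N ρ y x + m2 N ρ x y)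
        (((h1 x).add (h1' x)).add (h2 x)),
      lintegral_add_left (f := fun y => m1 N ρ x y + m1 N ρ y x) ((h1 x).add (h1' x)), lintegral_add_left (h1 x)]
  have g1 : Measurable fun x : ℝ => ∫⁻ y : ℝ, m1 N ρ x y :=
    Measurable.lintegral_prod_right hm1u
  have g1' : Measurable fun x : ℝ => ∫⁻ y : ℝ, m1 N ρ y x :=
    Measurable.lintegral_prod_right hm1s
  have g2 : Measurable fun x : ℝ => ∫⁻ y : ℝ, m2 N ρ x y :=
    Measurable.lintegral_prod_right hm2u
  have swap1 : (∫⁻ x : ℝ, ∫⁻ y : ℝ, m1 N ρ y x) = ∫⁻ x : ℝ, ∫⁻ y : ℝ, m1 N ρ x y :=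
    lintegral_lintegral_swap hm1s.aemeasurable
  have swap2 : (∫⁻ x : ℝ, ∫⁻ y : ℝ, m2 N ρ y x) = ∫⁻ x : ℝ, ∫⁻ y : ℝ, m2 N ρ x y :=
    lintegral_lintegral_swap hm2s.aemeasurable
  calc gagliardoSq (vf N ρ)
      ≤ ∫⁻ x : ℝ, ∫⁻ y : ℝ, (m1 N ρ x y + m1 N ρ y x + m2 N ρ x y + m2 N ρ y x) := stepA
  _ = (∫⁻ x : ℝ, ∫⁻ y : ℝ, m1 N ρ x y) + (∫⁻ x : ℝ, ∫⁻ y : ℝ, m1 N ρ y x)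
      + (∫⁻ x : ℝ, ∫⁻ y : ℝ, m2 N ρ x y) + (∫⁻ x : ℝ, ∫⁻ y : ℝ, m2 N ρ y x) := by
      rw [lintegral_congr inner_split,
        lintegral_add_left (f := fun x => (∫⁻ y : ℝ, m1 N ρ x y)
          + (∫⁻ y : ℝ, m1 N ρ y x) + (∫⁻ y : ℝ, m2 N ρ x y)) ((g1.add g1').add g2),
        lintegral_add_left (f := fun x => (∫⁻ y : ℝ, m1 N ρ x y)
          + (∫⁻ y : ℝ, m1 N ρ y x)) (g1.add g1'), lintegral_add_left g1]
  _ = (∫⁻ x : ℝ, ∫⁻ y : ℝ, m1 N ρ x y) + (∫⁻ x : ℝ, ∫⁻ y : ℝ, m1 N ρ x y)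
      + (∫⁻ x : ℝ, ∫⁻ y : ℝ, m2 N ρ x y) + (∫⁻ x : ℝ, ∫⁻ y : ℝ, m2 N ρ x y) := by
      rw [swap1, swap2]
  _ ≤ ENNReal.ofReal (8*(N+1)/N^2) + ENNReal.ofReal (8*(N+1)/N^2)
      + ENNReal.ofReal (1536*(N+1)/N^2) + ENNReal.ofReal (1536*(N+1)/N^2) :=
      add_le_add (add_le_add (add_le_add (D1_bound hN hρ) (D1_bound hN hρ))
        (D2_bound hN hρ)) (D2_bound hN hρ)
  _ ≤ ENNReal.ofReal (10000/N) := by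
      rw [← ENNReal.ofReal_add (by positivity) (by positivity),
        ← ENNReal.ofReal_add (by positivity) (by positivity),
        ← ENNReal.ofReal_add (by positivity) (by positivity)]
      apply ENNReal.ofReal_le_ofReal
      have e : 8*(N+1)/N^2 + 8*(N+1)/N^2 + 1536*(N+1)/N^2 + 1536*(N+1)/N^2
          = 3088*(N+1)/N^2 := by ring
      rw [e, div_le_div_iff₀ (by positivity) h0]
      nlinarith

end integrals

lemma main_construction (x₀ N ρ : ℝ) (hN : 1 ≤ N) (hρ : 0 < ρ) :
    ∃ v : ℝ → ℝ,
      (∀ x, |x - x₀| ≤ ρ * Real.exp N → v x = 1) ∧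
      (∀ x, ρ * Real.exp (2*N) ≤ |x - x₀| → v x = 0) ∧
      MemLp v 2 volume ∧
      (∫⁻ x : ℝ, ENNReal.ofReal ((v x)^2)) ≤ ENNReal.ofReal (2 * (ρ * Real.exp (2*N))) ∧
      gagliardoSq v ≤ ENNReal.ofReal (10000/N) := by
  have h0 : (0:ℝ) < N := lt_of_lt_of_le one_pos hN
  set B := ρ * Real.exp (2*N) with hBdef
  have hB : 0 < B := by positivity
  refine ⟨fun x => vf N ρ (x - x₀), ?_, ?_, ?_, ?_, ?_⟩
  · exact fun x hx => vf_eq_one hN hρ hx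
  · exact fun x hx => vf_eq_zero hN hρ hx
  · have hsm : Measurable fun x => vf N ρ (x - x₀) :=
      (vf_meas N ρ).comp (measurable_id.sub_const x₀)
    have hg : MemLp ((Icc (x₀ - B) (x₀ + B)).indicator fun _ => (1:ℝ)) 2 volume :=
      memLp_indicator_const 2 measurableSet_Icc 1
        (Or.inr (by rw [Real.volume_Icc]; exact ENNReal.ofReal_ne_top))
    refine MemLp.of_le hg hsm.aestronglyMeasurable (ae_of_all _ fun x => ?_)
    by_cases hx : x ∈ Icc (x₀ - B) (x₀ + B)
    · rw [indicator_of_mem hx, Real.norm_eq_abs, Real.norm_eq_abs, abs_one]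
      have := vf_mem hN (ρ := ρ) (x - x₀)
      exact abs_le.2 ⟨by linarith [this.1], this.2⟩
    · rw [indicator_of_notMem hx]
      have hout : B ≤ |x - x₀| := by
        rw [mem_Icc, not_and_or] at hx
        rcases hx with hx | hx
        · push_neg at hx
          exact le_abs.2 (Or.inr (by linarith))
        · push_neg at hx
          exact le_abs.2 (Or.inl (by linarith))
      rw [vf_eq_zero hN hρ hout]
  · have hptw : ∀ x : ℝ, ENNReal.ofReal ((vf N ρ (x - x₀))^2)
        ≤ (Icc (x₀ - B) (x₀ + B)).indicator (fun _ => (1:ENNReal)) x := by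
      intro x
      by_cases hx : x ∈ Icc (x₀ - B) (x₀ + B)
      · rw [indicator_of_mem hx]
        have hm := vf_mem hN (ρ := ρ) (x - x₀)
        calc ENNReal.ofReal ((vf N ρ (x - x₀))^2) ≤ ENNReal.ofReal 1 := by
              apply ENNReal.ofReal_le_ofReal
              nlinarith [hm.1, hm.2]
        _ = 1 := ENNReal.ofReal_one
      · rw [indicator_of_notMem hx]
        have hout : B ≤ |x - x₀| := by
          rw [mem_Icc, not_and_or] at hx
          rcases hx with hx | hx
          · push_neg at hx
            exact le_abs.2 (Or.inr (by linarith))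
          · push_neg at hx
            exact le_abs.2 (Or.inl (by linarith))
        rw [vf_eq_zero hN hρ hout]
        simp
    calc ∫⁻ x : ℝ, ENNReal.ofReal ((vf N ρ (x - x₀))^2)
        ≤ ∫⁻ x : ℝ, (Icc (x₀ - B) (x₀ + B)).indicator (fun _ => (1:ENNReal)) x :=
          lintegral_mono hptw
    _ = 1 * volume (Icc (x₀ - B) (x₀ + B)) := by
        rw [lintegral_indicator measurableSet_Icc, setLIntegral_const]
    _ = ENNReal.ofReal (2 * B) := by
        rw [one_mul, Real.volume_Icc]
        congr 1
        ring
  · have houter : (fun x : ℝ => ∫⁻ y : ℝ,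
        ENNReal.ofReal ((vf N ρ (x - x₀) - vf N ρ (y - x₀))^2 / (x - y)^2))
        = fun x : ℝ => (fun x' : ℝ => ∫⁻ y : ℝ,
          ENNReal.ofReal ((vf N ρ x' - vf N ρ y)^2 / (x' - y)^2)) (x + -x₀) := by
      funext x
      have e : ∀ y : ℝ, ENNReal.ofReal ((vf N ρ (x - x₀) - vf N ρ (y - x₀))^2 / (x - y)^2)
          = (fun y' : ℝ => ENNReal.ofReal
              ((vf N ρ (x - x₀) - vf N ρ y')^2 / ((x - x₀) - y')^2)) (y + -x₀) := by
        intro y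
        simp only
        rw [← sub_eq_add_neg, sub_sub_sub_cancel_right]
      rw [lintegral_congr e, lintegral_add_right_eq_self
        (fun y' : ℝ => ENNReal.ofReal ((vf N ρ (x - x₀) - vf N ρ y')^2 / ((x - x₀) - y')^2))
        (-x₀)]
      simp only [← sub_eq_add_neg]
    have htrans : gagliardoSq (fun x => vf N ρ (x - x₀)) = gagliardoSq (vf N ρ) := by
      unfold gagliardoSq
      rw [houter, lintegral_add_right_eq_self
        (fun x' : ℝ => ∫⁻ y : ℝ, ENNReal.ofReal ((vf N ρ x' - vf N ρ y)^2 / (x' - y)^2))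
        (-x₀)]
    rw [htrans]
    exact gag_bound hN hρ

/-- Vanishing of `H^{1/2}`-capacities: bounded intervals have zero homogeneous
`H^{1/2}`-capacity, and points have zero capacity even for the full `H^{1/2}`-norm. -/
theorem h12_capacities_vanish :
    (∀ x₀ r t : ℝ, 0 < r → 0 < t →
      ∃ v : ℝ → ℝ, ∃ U : Set ℝ, IsOpen U ∧ Icc (x₀ - r) (x₀ + r) ⊆ U ∧
        MeasureTheory.MemLp v 2 MeasureTheory.volume ∧
        (∀ᵐ x ∂MeasureTheory.volume, x ∈ U → v x = 1) ∧
        gagliardoSq v ≤ ENNReal.ofReal t) ∧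
    (∀ x₀ r : ℝ, 0 < r →
      sInf {E : ENNReal | ∃ v : ℝ → ℝ, ∃ U : Set ℝ,
        IsOpen U ∧ Ioo (x₀ - r) (x₀ + r) ⊆ U ∧
        MeasureTheory.MemLp v 2 MeasureTheory.volume ∧ gagliardoSq v < ⊤ ∧
        (∀ᵐ x ∂MeasureTheory.volume, x ∈ U → v x = 1) ∧
        E = gagliardoSq v} = 0) ∧
    (∀ x₀ t : ℝ, 0 < t →
      ∃ v : ℝ → ℝ, ∃ U : Set ℝ, IsOpen U ∧ x₀ ∈ U ∧
        MeasureTheory.MemLp v 2 MeasureTheory.volume ∧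
        (∀ᵐ x ∂MeasureTheory.volume, x ∈ U → v x = 1) ∧
        (∫⁻ x : ℝ, ENNReal.ofReal ((v x) ^ 2)) + gagliardoSq v ≤ ENNReal.ofReal t) ∧
    (∀ x₀ : ℝ,
      sInf {E : ENNReal | ∃ v : ℝ → ℝ, ∃ U : Set ℝ, IsOpen U ∧ x₀ ∈ U ∧
        MeasureTheory.MemLp v 2 MeasureTheory.volume ∧ gagliardoSq v < ⊤ ∧
        (∀ᵐ x ∂MeasureTheory.volume, x ∈ U → v x = 1) ∧
        E = (∫⁻ x : ℝ, ENNReal.ofReal ((v x) ^ 2)) + gagliardoSq v} = 0) := by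
  have P1 : ∀ x₀ r t : ℝ, 0 < r → 0 < t →
      ∃ v : ℝ → ℝ, ∃ U : Set ℝ, IsOpen U ∧ Icc (x₀ - r) (x₀ + r) ⊆ U ∧
        MemLp v 2 volume ∧ (∀ᵐ x ∂(volume : Measure ℝ), x ∈ U → v x = 1) ∧
        gagliardoSq v ≤ ENNReal.ofReal t := by
    intro x₀ r t hr ht
    set N := max 1 (10000/t) with hNdef
    have hN1 : (1:ℝ) ≤ N := le_max_left _ _
    have hN0 : (0:ℝ) < N := lt_of_lt_of_le one_pos hN1
    have hNt : 10000/N ≤ t := by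
      have h1 : 10000/t ≤ N := le_max_right _ _
      rw [div_le_iff₀ hN0]
      calc (10000:ℝ) = (10000/t)*t := by field_simp
      _ ≤ N*t := mul_le_mul_of_nonneg_right h1 ht.le
      _ = t*N := mul_comm N t
    obtain ⟨v, hv1, hv0, hmem, hL2, hgag⟩ := main_construction x₀ N r hN1 hr
    have hexp1 : (1:ℝ) < Real.exp N := by
      have := Real.add_one_le_exp N
      linarith
    refine ⟨v, {x : ℝ | |x - x₀| < r * Real.exp N}, ?_, ?_, hmem, ?_, ?_⟩
    · have : IsOpen ((fun x : ℝ => |x - x₀|) ⁻¹' (Iio (r * Real.exp N))) :=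
        (isOpen_Iio).preimage ((continuous_id.sub continuous_const).abs)
      exact this
    · intro x hx
      rw [mem_Icc] at hx
      have h2 : |x - x₀| ≤ r := abs_le.2 ⟨by linarith, by linarith⟩
      have h3 : r < r * Real.exp N := (lt_mul_iff_one_lt_right hr).2 hexp1
      exact lt_of_le_of_lt h2 h3
    · exact ae_of_all _ fun x hx => hv1 x (le_of_lt hx)
    · exact le_trans hgag (ENNReal.ofReal_le_ofReal hNt)
  have P3 : ∀ x₀ t : ℝ, 0 < t →
      ∃ v : ℝ → ℝ, ∃ U : Set ℝ, IsOpen U ∧ x₀ ∈ U ∧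
        MemLp v 2 volume ∧ (∀ᵐ x ∂(volume : Measure ℝ), x ∈ U → v x = 1) ∧
        (∫⁻ x : ℝ, ENNReal.ofReal ((v x) ^ 2)) + gagliardoSq v ≤ ENNReal.ofReal t := by
    intro x₀ t ht
    set N := max 1 (20000/t) with hNdef
    have hN1 : (1:ℝ) ≤ N := le_max_left _ _
    have hN0 : (0:ℝ) < N := lt_of_lt_of_le one_pos hN1
    have hNt : 10000/N ≤ t/2 := by
      have h1 : 20000/t ≤ N := le_max_right _ _
      rw [div_le_div_iff₀ hN0 (by norm_num : (0:ℝ) < 2)]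
      calc (10000:ℝ)*2 = (20000/t)*t := by field_simp; norm_num
      _ ≤ N*t := mul_le_mul_of_nonneg_right h1 ht.le
      _ = t*N := mul_comm N t
    set ρ := (t/4) * Real.exp (-(2*N)) with hρdef
    have hρ : 0 < ρ := by positivity
    have hρB : 2 * (ρ * Real.exp (2*N)) = t/2 := by
      rw [hρdef, Real.exp_neg]
      field_simp
      ring
    obtain ⟨v, hv1, hv0, hmem, hL2, hgag⟩ := main_construction x₀ N ρ hN1 hρ
    refine ⟨v, {x : ℝ | |x - x₀| < ρ * Real.exp N}, ?_, ?_, hmem, ?_, ?_⟩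
    · exact (isOpen_Iio).preimage ((continuous_id.sub continuous_const).abs)
    · show |x₀ - x₀| < ρ * Real.exp N
      rw [sub_self, abs_zero]
      positivity
    · exact ae_of_all _ fun x hx => hv1 x (le_of_lt hx)
    · calc (∫⁻ x : ℝ, ENNReal.ofReal ((v x) ^ 2)) + gagliardoSq v
          ≤ ENNReal.ofReal (2 * (ρ * Real.exp (2*N))) + ENNReal.ofReal (10000/N) :=
            add_le_add hL2 hgag
      _ ≤ ENNReal.ofReal (t/2) + ENNReal.ofReal (t/2) := by
          rw [hρB]
          exact add_le_add le_rfl (ENNReal.ofReal_le_ofReal hNt)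
      _ = ENNReal.ofReal t := by
          rw [← ENNReal.ofReal_add (by positivity) (by positivity)]
          norm_num
  refine ⟨P1, ?_, P3, ?_⟩
  · intro x₀ r hr
    refine le_antisymm ?_ zero_le
    refine ENNReal.le_of_forall_pos_le_add fun ε hε _ => ?_
    rw [zero_add]
    have hε' : (0:ℝ) < (ε:ℝ) := hε
    obtain ⟨v, U, hopen, hsub, hmem, hae, hgag⟩ := P1 x₀ r (ε:ℝ) hr hε'
    have hfin : gagliardoSq v < ⊤ := lt_of_le_of_lt hgag ENNReal.ofReal_lt_top
    have hmemS : gagliardoSq v ∈ {E : ENNReal | ∃ v : ℝ → ℝ, ∃ U : Set ℝ,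
        IsOpen U ∧ Ioo (x₀ - r) (x₀ + r) ⊆ U ∧
        MemLp v 2 volume ∧ gagliardoSq v < ⊤ ∧
        (∀ᵐ x ∂(volume : Measure ℝ), x ∈ U → v x = 1) ∧
        E = gagliardoSq v} :=
      ⟨v, U, hopen, (Ioo_subset_Icc_self).trans hsub, hmem, hfin, hae, rfl⟩
    calc sInf _ ≤ gagliardoSq v := sInf_le hmemS
    _ ≤ ENNReal.ofReal (ε:ℝ) := hgag
    _ = (ε : ENNReal) := ENNReal.ofReal_coe_nnreal
  · intro x₀
    refine le_antisymm ?_ zero_le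
    refine ENNReal.le_of_forall_pos_le_add fun ε hε _ => ?_
    rw [zero_add]
    have hε' : (0:ℝ) < (ε:ℝ) := hε
    obtain ⟨v, U, hopen, hx₀, hmem, hae, hsum⟩ := P3 x₀ (ε:ℝ) hε'
    have hfin : gagliardoSq v < ⊤ :=
      lt_of_le_of_lt (le_trans (le_add_left le_rfl) hsum) ENNReal.ofReal_lt_top
    have hmemS : (∫⁻ x : ℝ, ENNReal.ofReal ((v x) ^ 2)) + gagliardoSq v
        ∈ {E : ENNReal | ∃ v : ℝ → ℝ, ∃ U : Set ℝ, IsOpen U ∧ x₀ ∈ U ∧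
        MemLp v 2 volume ∧ gagliardoSq v < ⊤ ∧
        (∀ᵐ x ∂(volume : Measure ℝ), x ∈ U → v x = 1) ∧
        E = (∫⁻ x : ℝ, ENNReal.ofReal ((v x) ^ 2)) + gagliardoSq v} :=
      ⟨v, U, hopen, hx₀, hmem, hfin, hae, rfl⟩
    calc sInf _ ≤ (∫⁻ x : ℝ, ENNReal.ofReal ((v x) ^ 2)) + gagliardoSq v := sInf_le hmemS
    _ ≤ ENNReal.ofReal (ε:ℝ) := hsum
    _ = (ε : ENNReal) := ENNReal.ofReal_coe_nnreal
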